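/- Let P : C̃ → C together with ramification numbers e be a ramified covering of small categories. If f̃ : x̃ → ỹ is a non-identity morphism in C̃, then e(ỹ) = 1. -/

import Mathlib

open CategoryTheory

universe u

/-- The set of morphisms of `C` with target `x`, encoded as a sigma type. -/
abbrev Tgt (C : Type u) [SmallCategory C] (x : C) : Type u := Σ a : C, a ⟶ x

/-- The set of morphisms of `C` with source `x`, encoded as a sigma type. -/
abbrev Src (C : Type u) [SmallCategory C] (x : C) : Type u := Σ b : C, x ⟶ b

/-- The map `T(x̃) → T(P x̃)` induced by a functor `P`. -/
def tgtMap {D C : Type u} [SmallCategory D] [SmallCategory C] (P : D ⥤ C) (x : D) :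
    Tgt D x → Tgt C (P.obj x) := fun g => ⟨P.obj g.1, P.map g.2⟩

/-- The map `S(x̃) → S(P x̃)` induced by a functor `P`. -/
def srcMap {D C : Type u} [SmallCategory D] [SmallCategory C] (P : D ⥤ C) (x : D) :
    Src D x → Src C (P.obj x) := fun g => ⟨P.obj g.1, P.map g.2⟩

/-- `P : D ⥤ C` together with ramification numbers `e` is a ramified covering:
`C` is connected, `e x ≥ 1` for all `x`, `P : T(x̃) → T(P x̃)` is bijective,
every morphism of `S̄(P x̃)` has exactly `e x̃` preimages in `S̄(x̃)`, and
`e x̃ = 1` whenever `S̄(P x̃)` is empty. -/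
structure IsRamifiedCovering {D C : Type u} [SmallCategory D] [SmallCategory C]
    (P : D ⥤ C) (e : D → ℕ) : Prop where
  nonempty : Nonempty C
  zigzag : ∀ x y : C, Zigzag x y
  one_le : ∀ x : D, 1 ≤ e x
  tgt_bij : ∀ x : D, Function.Bijective (tgtMap P x)
  src_count : ∀ (x : D) (g : Src C (P.obj x)), g ≠ ⟨P.obj x, 𝟙 (P.obj x)⟩ →
    Nat.card {h : Src D x // h ≠ ⟨x, 𝟙 x⟩ ∧ srcMap P x h = g} = e x
  ram_one : ∀ x : D, (∀ g : Src C (P.obj x), g = ⟨P.obj x, 𝟙 (P.obj x)⟩) → e x = 1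

section Helpers

variable {B : Type u} [SmallCategory B]

/-- If a morphism equals the identity when regarded in `S(a)`, it also does in `T(b)`. -/
lemma swap_src_tgt {a b : B} {m : a ⟶ b} (hyp : (⟨b, m⟩ : Src B a) = ⟨a, 𝟙 a⟩) :
    (⟨a, m⟩ : Tgt B b) = ⟨b, 𝟙 b⟩ := by
  have h1 : b = a := congrArg Sigma.fst hyp
  subst h1
  rw [Sigma.mk.inj_iff] at hyp ⊢
  exact ⟨rfl, hyp.2⟩

/-- If a morphism equals the identity when regarded in `T(b)`, it also does in `S(a)`. -/
lemma swap_tgt_src {a b : B} {m : a ⟶ b} (hyp : (⟨a, m⟩ : Tgt B b) = ⟨b, 𝟙 b⟩) :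
    (⟨b, m⟩ : Src B a) = ⟨a, 𝟙 a⟩ := by
  have h1 : a = b := congrArg Sigma.fst hyp
  subst h1
  rw [Sigma.mk.inj_iff] at hyp ⊢
  exact ⟨rfl, hyp.2⟩

/-- Transporting a non-identity morphism along an object equality keeps it non-identity. -/
lemma nonid_transport {py w z : B} {g : py ⟶ z} (hw : w = py)
    (hne : (⟨z, g⟩ : Src B py) ≠ ⟨py, 𝟙 py⟩) :
    (⟨z, eqToHom hw ≫ g⟩ : Src B w) ≠ ⟨w, 𝟙 w⟩ := by
  subst hw
  simpa using hne

/-- Compatibility of composition with sigma-type equalities. -/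
lemma comp_lift_eq {px py w z b : B} {pm : px ⟶ w} {pf : px ⟶ py} {ph : w ⟶ b} {g : py ⟶ z}
    (hw : w = py) (hu : (⟨w, pm⟩ : Src B px) = ⟨py, pf⟩)
    (hh : (⟨b, ph⟩ : Src B w) = ⟨z, eqToHom hw ≫ g⟩) :
    (⟨b, pm ≫ ph⟩ : Src B px) = ⟨z, pf ≫ g⟩ := by
  subst hw
  simp only [Sigma.mk.inj_iff, eqToHom_refl, Category.id_comp] at hu hh
  obtain ⟨-, h2⟩ := hu
  obtain ⟨hb, hph⟩ := hh
  subst hb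
  rw [eq_of_heq h2, eq_of_heq hph]

/-- Two lifts of `g` with the same target are equal in `T(pb)`. -/
lemma tgt_eq_of_lifts {py z w1 w2 pb : B} {g : py ⟶ z} (hw1 : w1 = py) (hw2 : w2 = py)
    {ph1 : w1 ⟶ pb} {ph2 : w2 ⟶ pb}
    (hh1 : (⟨pb, ph1⟩ : Src B w1) = ⟨z, eqToHom hw1 ≫ g⟩)
    (hh2 : (⟨pb, ph2⟩ : Src B w2) = ⟨z, eqToHom hw2 ≫ g⟩) :
    (⟨w1, ph1⟩ : Tgt B pb) = ⟨w2, ph2⟩ := by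
  subst hw1; subst hw2
  simp only [Sigma.mk.inj_iff, eqToHom_refl, Category.id_comp] at hh1 hh2
  obtain ⟨hb, hp1⟩ := hh1
  subst hb
  obtain ⟨-, hp2⟩ := hh2
  rw [eq_of_heq hp1, eq_of_heq hp2]

/-- Two morphisms equal to `pf` in `S(px)` are equal in `T(w)`. -/
lemma src_eq_of_lifts {px py w : B} {pm1 pm2 : px ⟶ w} {pf : px ⟶ py}
    (h1 : (⟨w, pm1⟩ : Src B px) = ⟨py, pf⟩) (h2 : (⟨w, pm2⟩ : Src B px) = ⟨py, pf⟩) :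
    (⟨px, pm1⟩ : Tgt B w) = ⟨px, pm2⟩ := by
  have hw : w = py := congrArg Sigma.fst h1
  subst hw
  rw [Sigma.mk.inj_iff] at h1 h2
  rw [eq_of_heq h1.2, eq_of_heq h2.2]

end Helpers

/-- If `f̃ : x̃ ⟶ ỹ` is a non-identity morphism of `C̃`, then `e(ỹ) = 1`. -/
theorem ramifiedCovering_target_ram_one {D C : Type u} [SmallCategory D] [SmallCategory C]
    (P : D ⥤ C) (e : D → ℕ) (h : IsRamifiedCovering P e) {x y : D} (f : x ⟶ y)
    (hf : (⟨y, f⟩ : Src D x) ≠ ⟨x, 𝟙 x⟩) :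
    e y = 1 := by
  classical
  by_cases hS : ∀ g : Src C (P.obj y), g = ⟨P.obj y, 𝟙 (P.obj y)⟩
  · exact h.ram_one y hS
  push_neg at hS
  obtain ⟨⟨z, g⟩, hg⟩ := hS
  -- `P f` is not an identity
  have hPf : (⟨P.obj y, P.map f⟩ : Src C (P.obj x)) ≠ ⟨P.obj x, 𝟙 (P.obj x)⟩ := by
    intro hyp
    apply hf
    have h1 : (⟨P.obj x, P.map f⟩ : Tgt C (P.obj y)) = ⟨P.obj y, 𝟙 (P.obj y)⟩ :=
      swap_src_tgt hyp
    have h2 : tgtMap P y ⟨x, f⟩ = tgtMap P y ⟨y, 𝟙 y⟩ := by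
      simpa [tgtMap] using h1
    exact swap_tgt_src ((h.tgt_bij y).1 h2)
  -- `P` reflects identities
  have reflect_id : ∀ (k : Src D x), srcMap P x k = ⟨P.obj x, 𝟙 (P.obj x)⟩ → k = ⟨x, 𝟙 x⟩ := by
    rintro ⟨v, k⟩ hk
    simp only [srcMap] at hk
    have h1 : (⟨P.obj x, P.map k⟩ : Tgt C (P.obj v)) = ⟨P.obj v, 𝟙 (P.obj v)⟩ :=
      swap_src_tgt hk
    have h2 : tgtMap P v ⟨x, k⟩ = tgtMap P v ⟨v, 𝟙 v⟩ := by
      simpa [tgtMap] using h1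
    exact swap_tgt_src ((h.tgt_bij v).1 h2)
  have base_nonid : ∀ u : Src D x, srcMap P x u = ⟨P.obj y, P.map f⟩ → u ≠ ⟨x, 𝟙 x⟩ := by
    intro u hu hid
    rw [hid] at hu
    apply hPf
    rw [← hu]
    simp [srcMap]
  -- a canonical lift of `g` over every lift of `P f`
  have exists_pick : ∀ u : {u : Src D x // srcMap P x u = ⟨P.obj y, P.map f⟩},
      ∃ k : Src D u.1.1, k ≠ ⟨u.1.1, 𝟙 u.1.1⟩ ∧
        srcMap P u.1.1 k = ⟨z, eqToHom (congrArg Sigma.fst u.2) ≫ g⟩ := by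
    intro u
    have hne : (⟨z, eqToHom (congrArg Sigma.fst u.2) ≫ g⟩ : Src C (P.obj u.1.1)) ≠
        ⟨P.obj u.1.1, 𝟙 (P.obj u.1.1)⟩ :=
      nonid_transport (congrArg Sigma.fst u.2) hg
    have hcard := h.src_count u.1.1 ⟨z, eqToHom (congrArg Sigma.fst u.2) ≫ g⟩ hne
    have hpos : 0 < Nat.card {k : Src D u.1.1 // k ≠ ⟨u.1.1, 𝟙 u.1.1⟩ ∧
        srcMap P u.1.1 k = ⟨z, eqToHom (congrArg Sigma.fst u.2) ≫ g⟩} := by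
      rw [hcard]; exact h.one_le u.1.1
    obtain ⟨⟨⟨k, hk1, hk2⟩⟩, -⟩ := Nat.card_pos_iff.mp hpos
    exact ⟨k, hk1, hk2⟩
  choose pick pick_ne pick_lift using exists_pick
  -- the comparison map
  have ι_spec : ∀ u : {u : Src D x // srcMap P x u = ⟨P.obj y, P.map f⟩},
      srcMap P x ⟨(pick u).1, u.1.2 ≫ (pick u).2⟩ = ⟨z, P.map f ≫ g⟩ := by
    intro u
    have hh := pick_lift u
    simp only [srcMap] at hh ⊢
    rw [P.map_comp]
    exact comp_lift_eq (congrArg Sigma.fst u.2) u.2 hh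
  set F : {u : Src D x // srcMap P x u = ⟨P.obj y, P.map f⟩} →
      {k : Src D x // srcMap P x k = ⟨z, P.map f ≫ g⟩} :=
    fun u => ⟨⟨(pick u).1, u.1.2 ≫ (pick u).2⟩, ι_spec u⟩ with hF
  -- uniqueness of lifts of `g` with a given target
  have key : ∀ (w1 w2 b1 b2 : D) (hb : b1 = b2) (hw1 : P.obj w1 = P.obj y)
      (hw2 : P.obj w2 = P.obj y) (k1 : w1 ⟶ b1) (k2 : w2 ⟶ b2),
      srcMap P w1 ⟨b1, k1⟩ = ⟨z, eqToHom hw1 ≫ g⟩ →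
      srcMap P w2 ⟨b2, k2⟩ = ⟨z, eqToHom hw2 ≫ g⟩ → w1 = w2 ∧ HEq k1 k2 := by
    intro w1 w2 b1 b2 hb hw1 hw2 k1 k2 hk1 hk2
    subst hb
    simp only [srcMap] at hk1 hk2
    have hT : (⟨w1, k1⟩ : Tgt D b1) = ⟨w2, k2⟩ := by
      apply (h.tgt_bij b1).1
      show (⟨P.obj w1, P.map k1⟩ : Tgt C (P.obj b1)) = ⟨P.obj w2, P.map k2⟩
      exact tgt_eq_of_lifts hw1 hw2 hk1 hk2
    injection hT with h1 h2
    exact ⟨h1, h2⟩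
  -- `F` is injective
  have F_inj : Function.Injective F := by
    intro u u' hee
    simp only [hF] at hee
    have hb : (pick u).1 = (pick u').1 := congrArg (fun a => a.1.1) hee
    obtain ⟨hw_eq, -⟩ := key u.1.1 u'.1.1 (pick u).1 (pick u').1 hb
      (congrArg Sigma.fst u.2) (congrArg Sigma.fst u'.2) (pick u).2 (pick u').2
      (pick_lift u) (pick_lift u')
    apply Subtype.ext
    obtain ⟨⟨w, m⟩, hu⟩ := u
    obtain ⟨⟨w', m'⟩, hu'⟩ := u'
    cases hw_eq
    have hTm : (⟨x, m⟩ : Tgt D w) = ⟨x, m'⟩ := by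
      apply (h.tgt_bij w).1
      show (⟨P.obj x, P.map m⟩ : Tgt C (P.obj w)) = ⟨P.obj x, P.map m'⟩
      exact src_eq_of_lifts hu hu'
    injection hTm with h1 h2
    show (⟨w, m⟩ : Src D x) = ⟨w, m'⟩
    rw [h2]
  -- cardinality of the base
  have cardBase : Nat.card {u : Src D x // srcMap P x u = ⟨P.obj y, P.map f⟩} = e x := by
    rw [← h.src_count x ⟨P.obj y, P.map f⟩ hPf]
    exact Nat.card_congr (Equiv.subtypeEquivRight (fun u =>
      ⟨fun hu => ⟨base_nonid u hu, hu⟩, fun hu => hu.2⟩))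
  -- cardinality of the total space
  have hid_img : srcMap P x ⟨x, 𝟙 x⟩ = ⟨P.obj x, 𝟙 (P.obj x)⟩ := by simp [srcMap]
  have cardA : Nat.card {k : Src D x // srcMap P x k = ⟨z, P.map f ≫ g⟩} = e x ∧
      Finite {k : Src D x // srcMap P x k = ⟨z, P.map f ≫ g⟩} := by
    by_cases hc : (⟨z, P.map f ≫ g⟩ : Src C (P.obj x)) = ⟨P.obj x, 𝟙 (P.obj x)⟩
    · have hsub : Subsingleton {k : Src D x // srcMap P x k = ⟨z, P.map f ≫ g⟩} := by
        constructor
        rintro ⟨k, hk⟩ ⟨k', hk'⟩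
        apply Subtype.ext
        show k = k'
        rw [reflect_id k (hk.trans hc), reflect_id k' (hk'.trans hc)]
      have hne : Nonempty {k : Src D x // srcMap P x k = ⟨z, P.map f ≫ g⟩} :=
        ⟨⟨⟨x, 𝟙 x⟩, hid_img.trans hc.symm⟩⟩
      have hA1 : Nat.card {k : Src D x // srcMap P x k = ⟨z, P.map f ≫ g⟩} = 1 :=
        Nat.card_eq_one_iff_unique.mpr ⟨hsub, hne⟩
      haveI : Finite {k : Src D x // srcMap P x k = ⟨z, P.map f ≫ g⟩} :=
        Finite.of_subsingleton
      have hx1 : e x ≤ 1 := by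
        rw [← cardBase, ← hA1]
        exact Nat.card_le_card_of_injective F F_inj
      have hex : e x = 1 := le_antisymm hx1 (h.one_le x)
      exact ⟨hA1.trans hex.symm, inferInstance⟩
    · have hAe : Nat.card {k : Src D x // srcMap P x k = ⟨z, P.map f ≫ g⟩} = e x := by
        rw [← h.src_count x ⟨z, P.map f ≫ g⟩ hc]
        refine Nat.card_congr (Equiv.subtypeEquivRight (fun k =>
          ⟨fun hk => ⟨fun hid => hc ?_, hk⟩, fun hk => hk.2⟩))
        rw [hid] at hk
        rw [← hk, hid_img]
      have hfin : Finite {k : Src D x // srcMap P x k = ⟨z, P.map f ≫ g⟩} := by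
        have : 0 < Nat.card {k : Src D x // srcMap P x k = ⟨z, P.map f ≫ g⟩} := by
          rw [hAe]; exact h.one_le x
        exact (Nat.card_pos_iff.mp this).2
      exact ⟨hAe, hfin⟩
  haveI finA := cardA.2
  have F_bij : Function.Bijective F :=
    (Nat.bijective_iff_injective_and_card F).mpr ⟨F_inj, by rw [cardBase, cardA.1]⟩
  -- the distinguished base point
  have hu0mem : srcMap P x (⟨y, f⟩ : Src D x) = ⟨P.obj y, P.map f⟩ := rfl
  set u0 : {u : Src D x // srcMap P x u = ⟨P.obj y, P.map f⟩} := ⟨⟨y, f⟩, hu0mem⟩ with hu0def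
  -- every lift of `g` at `y` is the canonical one
  have main : ∀ (b : D) (k : y ⟶ b), srcMap P y ⟨b, k⟩ = ⟨z, g⟩ →
      (⟨b, k⟩ : Src D y) = pick u0 := by
    intro b k hk
    have hk' : srcMap P y ⟨b, k⟩ = ⟨z, eqToHom (congrArg Sigma.fst u0.2) ≫ g⟩ := by
      rw [hk]
      exact Sigma.ext rfl (heq_of_eq (Category.id_comp g).symm)
    have hmemA : srcMap P x ⟨b, f ≫ k⟩ = ⟨z, P.map f ≫ g⟩ := by
      simp only [srcMap] at hk' ⊢
      rw [P.map_comp]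
      exact comp_lift_eq (congrArg Sigma.fst u0.2) u0.2 hk'
    obtain ⟨u', hu'⟩ := F_bij.2 ⟨⟨b, f ≫ k⟩, hmemA⟩
    simp only [hF] at hu'
    have hb : (pick u').1 = b := congrArg (fun a => a.1.1) hu'
    obtain ⟨hw_eq, hk_heq⟩ := key u'.1.1 y (pick u').1 b hb
      (congrArg Sigma.fst u'.2) (congrArg Sigma.fst u0.2) (pick u').2 k
      (pick_lift u') hk'
    have hu0' : u' = u0 := by
      apply Subtype.ext
      obtain ⟨⟨w', m'⟩, hw'⟩ := u'
      have hw2 : w' = y := hw_eq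
      cases hw2
      have hTm : (⟨x, m'⟩ : Tgt D y) = ⟨x, f⟩ := by
        apply (h.tgt_bij y).1
        show (⟨P.obj x, P.map m'⟩ : Tgt C (P.obj y)) = ⟨P.obj x, P.map f⟩
        exact src_eq_of_lifts hw' u0.2
      injection hTm with h1 h2
      show (⟨y, m'⟩ : Src D x) = ⟨y, f⟩
      rw [h2]
    rw [hu0'] at hb hk_heq
    exact Sigma.ext hb.symm hk_heq.symm
  -- conclude
  have hsub : Subsingleton {k : Src D y // k ≠ ⟨y, 𝟙 y⟩ ∧ srcMap P y k = ⟨z, g⟩} := by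
    constructor
    rintro ⟨⟨b1, k1⟩, -, hk1⟩ ⟨⟨b2, k2⟩, -, hk2⟩
    apply Subtype.ext
    show (⟨b1, k1⟩ : Src D y) = ⟨b2, k2⟩
    rw [main b1 k1 hk1, main b2 k2 hk2]
  have hcy := h.src_count y ⟨z, g⟩ hg
  have hpos : 0 < Nat.card {k : Src D y // k ≠ ⟨y, 𝟙 y⟩ ∧ srcMap P y k = ⟨z, g⟩} := by
    rw [hcy]; exact h.one_le y
  have hne : Nonempty {k : Src D y // k ≠ ⟨y, 𝟙 y⟩ ∧ srcMap P y k = ⟨z, g⟩} :=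
    (Nat.card_pos_iff.mp hpos).1
  rw [← hcy]
  exact Nat.card_eq_one_iff_unique.mpr ⟨hsub, hne⟩
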